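/- Let z ∈ ℂ and let {a_n}, {z_n} be an infinite continued fraction expansion and iteration sequence of z over the Eisenstein integers 𝔈 with respect to a nearest integer algorithm, with Q-pair {p_n}, {q_n}. If the sequence {|a_n|} is unbounded, then for every δ > 0 there exists n ≥ 0 such that |q_n|·|q_n·z − p_n| < δ; consequently z is not badly approximable with respect to 𝔈. -/

import Mathlib

open Complex

/-- The primitive cube root of unity ω = (−1 + √3·i)/2. -/
noncomputable def eisOmega : ℂ := (-1 + Real.sqrt 3 * Complex.I) / 2

/-- `a : ℂ` is an Eisenstein integer: `a = x + y·ω` with `x, y ∈ ℤ`. -/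
def IsEis (a : ℂ) : Prop := ∃ x y : ℤ, a = (x : ℂ) + (y : ℂ) * eisOmega

lemma eisOmega_sq : eisOmega * eisOmega = -1 - eisOmega := by
  have h : (Real.sqrt 3 : ℂ) * (Real.sqrt 3 : ℂ) = 3 := by
    norm_cast
    exact_mod_cast Real.mul_self_sqrt (by norm_num : (0:ℝ) ≤ 3)
  unfold eisOmega
  linear_combination (Complex.I * Complex.I * h + 3 * Complex.I_mul_I) / 4

lemma isEis_add {a b : ℂ} (ha : IsEis a) (hb : IsEis b) : IsEis (a + b) := by
  obtain ⟨x, y, rfl⟩ := ha; obtain ⟨u, v, rfl⟩ := hb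
  exact ⟨x + u, y + v, by push_cast; ring⟩

lemma isEis_mul {a b : ℂ} (ha : IsEis a) (hb : IsEis b) : IsEis (a * b) := by
  obtain ⟨x, y, rfl⟩ := ha; obtain ⟨u, v, rfl⟩ := hb
  refine ⟨x * u - y * v, x * v + y * u - y * v, ?_⟩
  push_cast
  linear_combination ((y : ℂ) * (v : ℂ)) * eisOmega_sq

lemma isEis_one : IsEis 1 := ⟨1, 0, by push_cast; ring⟩
lemma isEis_zero : IsEis 0 := ⟨0, 0, by push_cast; ring⟩

lemma eisOmega_re : eisOmega.re = -1/2 := by simp [eisOmega]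
lemma eisOmega_im : eisOmega.im = Real.sqrt 3 / 2 := by simp [eisOmega]

lemma isEis_near (w : ℂ) : ∃ b : ℂ, IsEis b ∧ ‖w - b‖ ≤ Real.sqrt 7 / 4 := by
  have hs3 : (0:ℝ) < Real.sqrt 3 := Real.sqrt_pos.mpr (by norm_num)
  set y : ℤ := round (2 * w.im / Real.sqrt 3) with hy
  set x : ℤ := round (w.re + (y:ℝ) / 2) with hx
  refine ⟨(x:ℂ) + (y:ℂ) * eisOmega, ⟨x, y, rfl⟩, ?_⟩
  have hre : (w - ((x:ℂ) + (y:ℂ) * eisOmega)).re = (w.re + (y:ℝ)/2) - (x:ℝ) := by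
    simp [Complex.sub_re, Complex.add_re, Complex.mul_re, eisOmega_re, eisOmega_im]
    ring
  have him : (w - ((x:ℂ) + (y:ℂ) * eisOmega)).im = w.im - (y:ℝ) * (Real.sqrt 3 / 2) := by
    simp [Complex.sub_im, Complex.add_im, Complex.mul_im, eisOmega_re, eisOmega_im]
  have h1 : |(w.re + (y:ℝ)/2) - (x:ℝ)| ≤ 1/2 := by
    rw [hx]; exact abs_sub_round _
  have h2 : |w.im - (y:ℝ) * (Real.sqrt 3 / 2)| ≤ Real.sqrt 3 / 4 := by
    have h := abs_sub_round (2 * w.im / Real.sqrt 3)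
    rw [← hy] at h
    have heq : w.im - (y:ℝ) * (Real.sqrt 3 / 2)
        = (Real.sqrt 3 / 2) * (2 * w.im / Real.sqrt 3 - (y:ℝ)) := by
      field_simp
    rw [heq, abs_mul, abs_of_pos (by positivity : (0:ℝ) < Real.sqrt 3 / 2)]
    calc Real.sqrt 3 / 2 * |2 * w.im / Real.sqrt 3 - (y:ℝ)| ≤ Real.sqrt 3 / 2 * (1/2) := by
          exact mul_le_mul_of_nonneg_left h (by positivity)
      _ = Real.sqrt 3 / 4 := by ring
  rw [Complex.norm_def, Complex.normSq_apply, hre, him]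
  have hsq3 : Real.sqrt 3 ^ 2 = 3 := Real.sq_sqrt (by norm_num)
  have hb : ((w.re + (y:ℝ)/2) - (x:ℝ)) * ((w.re + (y:ℝ)/2) - (x:ℝ))
      + (w.im - (y:ℝ) * (Real.sqrt 3 / 2)) * (w.im - (y:ℝ) * (Real.sqrt 3 / 2)) ≤ 7/16 := by
    have a1 := abs_le.mp h1
    have a2 := abs_le.mp h2
    nlinarith [hsq3, hs3]
  calc Real.sqrt _ ≤ Real.sqrt (7/16) := Real.sqrt_le_sqrt hb
    _ = Real.sqrt 7 / 4 := by
        rw [show (7:ℝ)/16 = (Real.sqrt 7 / 4)^2 by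
          rw [div_pow, Real.sq_sqrt (by norm_num : (0:ℝ) ≤ 7)]; norm_num]
        exact Real.sqrt_sq (by positivity)

/-- If {|aₙ|} is unbounded, then for every δ > 0 there is n with
|qₙ|·|qₙ·z − pₙ| < δ; consequently z is not badly approximable with respect
to 𝔈.  (Here `p (n+1)`, `q (n+1)` denote pₙ, qₙ.) -/
theorem eisenstein_cf_not_badly_approximable_of_unbounded
    (z : ℂ) (a zs : ℕ → ℂ)
    (ha : ∀ n, IsEis (a n))
    (hz0 : zs 0 = z)
    (hnear : ∀ n, ∀ b : ℂ, IsEis b → ‖zs n - a n‖ ≤ ‖zs n - b‖)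
    (hne : ∀ n, zs n ≠ a n)
    (hit : ∀ n, zs (n + 1) = (zs n - a n)⁻¹)
    (p q : ℕ → ℂ)
    (hp0 : p 0 = 1) (hp1 : p 1 = a 0)
    (hprec : ∀ n, p (n + 2) = a (n + 1) * p (n + 1) + p n)
    (hq0 : q 0 = 0) (hq1 : q 1 = 1)
    (hqrec : ∀ n, q (n + 2) = a (n + 1) * q (n + 1) + q n)
    (hqne : ∀ n, q (n + 1) ≠ 0)
    (hunb : ¬ ∃ C : ℝ, ∀ n : ℕ, ‖a n‖ ≤ C)
    :
    (∀ δ : ℝ, 0 < δ → ∃ n : ℕ,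
        ‖q (n + 1)‖ * ‖q (n + 1) * z - p (n + 1)‖ < δ) ∧
    ¬ (∃ δ : ℝ, 0 < δ ∧ ∀ pp qq : ℂ, IsEis pp → IsEis qq → qq ≠ 0 →
        δ / (‖qq‖) ^ 2 ≤ ‖z - pp / qq‖) := by
  set c : ℝ := Real.sqrt 7 / 4 with hc_def
  have hc0 : 0 ≤ c := by positivity
  have hc1 : c ≤ 1 := by
    rw [hc_def, div_le_one (by norm_num : (0:ℝ) < 4)]
    calc Real.sqrt 7 ≤ Real.sqrt 16 := Real.sqrt_le_sqrt (by norm_num)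
      _ = 4 := by rw [show (16:ℝ) = 4^2 by norm_num]; exact Real.sqrt_sq (by norm_num)
  have hc2 : c ^ 2 = 7/16 := by
    rw [hc_def, div_pow, Real.sq_sqrt (by norm_num : (0:ℝ) ≤ 7)]; norm_num
  have hcabs : ∀ n, ‖zs n - a n‖ ≤ c := by
    intro n
    obtain ⟨b, hb, hble⟩ := isEis_near (zs n)
    exact (hnear n b hb).trans hble
  set E : ℕ → ℂ := fun n => q n * z - p n with hE_def
  have hE0 : E 0 = -1 := by simp [hE_def, hq0, hp0]
  have hE1 : E 1 = zs 0 - a 0 := by simp [hE_def, hq1, hp1, hz0]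
  have hErec : ∀ n, E (n+2) = a (n+1) * E (n+1) + E n := by
    intro n; simp only [hE_def, hprec, hqrec]; ring
  have hEprod : ∀ n, E (n+1) = -(zs n - a n) * E n := by
    intro n
    induction n with
    | zero => rw [hE1, hE0]; ring
    | succ k ih =>
      have hk : zs k - a k ≠ 0 := sub_ne_zero.mpr (hne k)
      have ha' : a (k+1) = (zs k - a k)⁻¹ - (zs (k+1) - a (k+1)) := by
        rw [← hit k]; ring
      have hcancel : (zs k - a k) * (zs k - a k)⁻¹ = 1 := mul_inv_cancel₀ hk
      rw [hErec k, ih]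
      linear_combination (-(zs k - a k) * E k) * ha' + (-(E k)) * hcancel
  have hG : ∀ n, ‖q (n+1) * E n - q n * E (n+1)‖ = 1 := by
    intro n
    induction n with
    | zero => simp [hE0, hq0, hq1]
    | succ k ih =>
      have heq : q (k+2) * E (k+1) - q (k+1) * E (k+2)
          = -(q (k+1) * E k - q k * E (k+1)) := by
        rw [hqrec k, hErec k]; ring
      rw [heq, norm_neg]
      exact ih
  have hstep : ∀ n, ‖q (n+1)‖ * ‖E (n+1)‖
      ≤ ‖zs n - a n‖ *
        (‖zs n - a n‖ * (‖q n‖ * ‖E n‖) + 1) := by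
    intro n
    have h1 : ‖q (n+1) * E n‖ ≤ ‖q n * E (n+1)‖ + 1 := by
      calc ‖q (n+1) * E n‖
          = ‖(q (n+1) * E n - q n * E (n+1)) + q n * E (n+1)‖ := by
            congr 1; ring
        _ ≤ ‖q (n+1) * E n - q n * E (n+1)‖
            + ‖q n * E (n+1)‖ := norm_add_le _ _
        _ = ‖q n * E (n+1)‖ + 1 := by rw [hG n]; ring
    have h2 : ‖E (n+1)‖ = ‖zs n - a n‖ * ‖E n‖ := by
      rw [hEprod n, norm_mul, norm_neg]
    have h3 : ‖q n * E (n+1)‖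
        = ‖zs n - a n‖ * (‖q n‖ * ‖E n‖) := by
      rw [norm_mul, h2]; ring
    calc ‖q (n+1)‖ * ‖E (n+1)‖
        = ‖zs n - a n‖ * ‖q (n+1) * E n‖ := by
          rw [h2, norm_mul]; ring
      _ ≤ ‖zs n - a n‖ * (‖q n * E (n+1)‖ + 1) := by
          exact mul_le_mul_of_nonneg_left h1 (norm_nonneg _)
      _ = ‖zs n - a n‖ *
          (‖zs n - a n‖ * (‖q n‖ * ‖E n‖) + 1) := by
          rw [h3]
  have hbound : ∀ n, ‖q n‖ * ‖E n‖ ≤ 2 := by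
    intro n
    induction n with
    | zero => simp [hq0]
    | succ k ih =>
      have hs := hstep k
      have he := hcabs k
      have he0 : (0:ℝ) ≤ ‖zs k - a k‖ := norm_nonneg _
      have hq0' : (0:ℝ) ≤ ‖q k‖ * ‖E k‖ := by positivity
      nlinarith [hs, he, ih, he0, hq0', hc2, hc0, hc1,
        mul_nonneg he0 hq0', sq_nonneg (c - ‖zs k - a k‖)]
  have part1 : ∀ δ : ℝ, 0 < δ → ∃ n : ℕ,
      ‖q (n + 1)‖ * ‖q (n + 1) * z - p (n + 1)‖ < δ := by
    intro δ hδ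
    push_neg at hunb
    obtain ⟨m, hm⟩ := hunb (max (‖a 0‖) (c + 3/δ))
    have hm0 : m ≠ 0 := by
      intro h
      rw [h] at hm
      exact absurd hm (not_lt.mpr (le_max_left _ _))
    obtain ⟨n, rfl⟩ := Nat.exists_eq_succ_of_ne_zero hm0
    refine ⟨n, ?_⟩
    have hza : ‖a (n+1)‖ - c ≤ ‖zs (n+1)‖ := by
      have h := hcabs (n+1)
      have h3 : ‖a (n+1)‖ ≤ ‖zs (n+1)‖
          + ‖zs (n+1) - a (n+1)‖ := by
        calc ‖a (n+1)‖
            = ‖zs (n+1) - (zs (n+1) - a (n+1))‖ := by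
              congr 1; ring
          _ ≤ ‖zs (n+1)‖ + ‖zs (n+1) - a (n+1)‖ := norm_sub_le _ _
          _ = ‖zs (n+1)‖ + ‖zs (n+1) - a (n+1)‖ := by
              rfl
      linarith
    have hCδ : c + 3/δ < ‖a (n+1)‖ :=
      lt_of_le_of_lt (le_max_right _ _) hm
    have hzbig : 3/δ < ‖zs (n+1)‖ := by linarith
    have h3δ : (0:ℝ) < 3/δ := by positivity
    have hen : ‖zs n - a n‖ = (‖zs (n+1)‖)⁻¹ := by
      rw [hit n, norm_inv, inv_inv]
    have hesmall : ‖zs n - a n‖ < δ/3 := by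
      rw [hen, show δ/3 = (3/δ)⁻¹ by rw [inv_div]]
      exact inv_strictAnti₀ h3δ hzbig
    have hs := hstep n
    have hb := hbound n
    have he := hcabs n
    have he0 : (0:ℝ) ≤ ‖zs n - a n‖ := norm_nonneg _
    have hq0' : (0:ℝ) ≤ ‖q n‖ * ‖E n‖ := by positivity
    show ‖q (n+1)‖ * ‖E (n+1)‖ < δ
    nlinarith [hs, hb, he, hesmall, he0, hq0', hc1, hc0, hδ,
      mul_nonneg he0 hq0']
  refine ⟨part1, ?_⟩
  rintro ⟨δ, hδ, hball⟩
  obtain ⟨n, hn⟩ := part1 δ hδ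
  have hkey : ∀ k, (IsEis (p k) ∧ IsEis (q k)) ∧ (IsEis (p (k+1)) ∧ IsEis (q (k+1))) := by
    intro k
    induction k with
    | zero =>
      refine ⟨⟨?_, ?_⟩, ?_, ?_⟩
      · rw [hp0]; exact isEis_one
      · rw [hq0]; exact isEis_zero
      · rw [hp1]; exact ha 0
      · rw [hq1]; exact isEis_one
    | succ k ih =>
      refine ⟨ih.2, ?_, ?_⟩
      · rw [hprec k]; exact isEis_add (isEis_mul (ha _) ih.2.1) ih.1.1
      · rw [hqrec k]; exact isEis_add (isEis_mul (ha _) ih.2.2) ih.1.2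
  have hqn := hqne n
  have habs : 0 < ‖q (n+1)‖ := norm_pos_iff.mpr hqn
  have hB := hball (p (n+1)) (q (n+1)) (hkey n).2.1 (hkey n).2.2 hqn
  have hdiv : ‖z - p (n+1) / q (n+1)‖
      = ‖q (n+1) * z - p (n+1)‖ / ‖q (n+1)‖ := by
    rw [show z - p (n+1) / q (n+1) = (q (n+1) * z - p (n+1)) / q (n+1) by
      field_simp, norm_div]
  rw [hdiv, div_le_div_iff₀ (by positivity) habs] at hB
  nlinarith [hB, habs, hn, norm_nonneg (q (n+1) * z - p (n+1))]
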